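/- Let P be any finite poset, K a ring, and f a K-labeling with Rf ≠ ⊥. Set a = f(0), b = f(1). Assume (Rf)(u) is invertible for every u ∈ P̂ with u ⋗ 0. Then b · (Σ_{u ⋗ 0 in P̂} (Rf)(u)⁻¹) · a = Σ_{u ⋖ 1 in P̂} f(u). -/

import Mathlib

open scoped Classical


instance {α : Type*} [Fintype α] : Fintype (WithTop α) :=
  inferInstanceAs (Fintype (Option α))

instance {α : Type*} [Fintype α] : Fintype (WithBot α) :=
  inferInstanceAs (Fintype (Option α))

/-- The poset `P` with an adjoined global minimum `⊥` (called `0` in the paper) and an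
adjoined global maximum `⊤` (called `1` in the paper). -/
abbrev PHat (P : Type*) := WithBot (WithTop P)

/-- The embedding of `P` into `PHat P`. -/
def toPHat {P : Type*} (v : P) : PHat P := ((v : WithTop P) : WithBot (WithTop P))

set_option linter.unusedSectionVars false

section Aux

variable {P : Type*} [PartialOrder P] [Fintype P] {K : Type*} [Ring K]

lemma toPHat_injective : Function.Injective (toPHat (P := P)) := by
  intro a b h
  simpa [toPHat] using h

lemma toPHat_ne_bot (v : P) : toPHat v ≠ (⊥ : PHat P) := by simp [toPHat]

lemma toPHat_ne_top (v : P) : toPHat v ≠ (⊤ : PHat P) := by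
  simp only [toPHat]
  intro h
  rw [show (⊤ : PHat P) = ((⊤ : WithTop P) : WithBot (WithTop P)) from rfl] at h
  exact WithTop.coe_ne_top (WithBot.coe_injective h)

lemma toPHat_lt_iff {v w : P} : toPHat v < toPHat w ↔ v < w := by
  simp [toPHat]

lemma bot_lt_toPHat (v : P) : (⊥ : PHat P) < toPHat v := by simp [toPHat]

lemma toPHat_lt_top (v : P) : toPHat v < (⊤ : PHat P) := by
  rw [show (⊤ : PHat P) = ((⊤ : WithTop P) : WithBot (WithTop P)) from rfl, toPHat,
    WithBot.coe_lt_coe]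
  exact WithTop.coe_lt_top v

lemma univ_phat_eq :
    (Finset.univ : Finset (PHat P)) =
      insert ⊥ (insert ⊤ (Finset.univ.image toPHat)) := by
  ext u
  simp only [Finset.mem_univ, true_iff, Finset.mem_insert, Finset.mem_image]
  induction u using WithBot.recBotCoe with
  | bot => exact Or.inl rfl
  | coe a =>
    induction a using WithTop.recTopCoe with
    | top => exact Or.inr (Or.inl rfl)
    | coe w => exact Or.inr (Or.inr ⟨w, by simp [toPHat]⟩)

lemma sum_phat (F : PHat P → K) :
    ∑ u : PHat P, F u = F ⊥ + F ⊤ + ∑ w : P, F (toPHat w) := by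
  rw [univ_phat_eq, Finset.sum_insert, Finset.sum_insert, Finset.sum_image
    (fun a _ b _ h => toPHat_injective h), add_assoc]
  · simp only [Finset.mem_image, Finset.mem_univ, true_and]
    rintro ⟨w, hw⟩
    exact toPHat_ne_top w hw
  · simp only [Finset.mem_insert, Finset.mem_image, Finset.mem_univ, true_and]
    rintro (h | ⟨w, hw⟩)
    · exact absurd h bot_ne_top
    · exact toPHat_ne_bot w hw

lemma sum_filter_phat (p : PHat P → Prop) (F : PHat P → K) :
    ∑ u ∈ Finset.univ.filter p, F u =
      (if p ⊥ then F ⊥ else 0) + (if p ⊤ then F ⊤ else 0) +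
        ∑ w ∈ Finset.univ.filter (fun w => p (toPHat w)), F (toPHat w) := by
  rw [Finset.sum_filter, Finset.sum_filter, sum_phat]

end Aux


/-- The birational toggle `T_v` at an element `v ∈ P`, as a partial map (modelled via
`Option`) on `K`-labelings `f : PHat P → K`.  It replaces the label at `v` by
`(∑_{u ⋖ v} f u) * (f v)⁻¹ * (∑_{u ⋗ v} (f u)⁻¹)⁻¹` and leaves all other labels unchanged;
it is undefined (`none`) whenever any of the required inverses fails to exist. -/
noncomputable def toggle {P : Type*} [PartialOrder P] [Fintype P] {K : Type*} [Ring K]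
    (v : P) (f : PHat P → K) : Option (PHat P → K) :=
  if IsUnit (f (toPHat v)) ∧ (∀ u : PHat P, toPHat v ⋖ u → IsUnit (f u)) ∧
      IsUnit (∑ u ∈ Finset.univ.filter (fun u : PHat P => toPHat v ⋖ u), Ring.inverse (f u))
  then some (Function.update f (toPHat v)
      ((∑ u ∈ Finset.univ.filter (fun u : PHat P => u ⋖ toPHat v), f u) *
        Ring.inverse (f (toPHat v)) *
        Ring.inverse
          (∑ u ∈ Finset.univ.filter (fun u : PHat P => toPHat v ⋖ u), Ring.inverse (f u))))
  else none

/-- `toggleList [v₁, …, vₘ] = T_{v₁} ∘ T_{v₂} ∘ ⋯ ∘ T_{vₘ}` as a partial map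
(`T_{vₘ}` is applied first); `⊥ = none` propagates through the composition. -/
noncomputable def toggleList {P : Type*} [PartialOrder P] [Fintype P] {K : Type*} [Ring K] :
    List P → (PHat P → K) → Option (PHat P → K)
  | [], f => some f
  | v :: L, f => (toggleList L f).bind (toggle v)

/-- `rowIter L n` is the `n`-fold iteration `R^n` of birational rowmotion
`R = toggleList L` (for `L` a linear extension of `P`), as a partial map. -/
noncomputable def rowIter {P : Type*} [PartialOrder P] [Fintype P] {K : Type*} [Ring K]
    (L : List P) : ℕ → (PHat P → K) → Option (PHat P → K)
  | 0, f => some f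
  | n + 1, f => (toggleList L f).bind (rowIter L n)

/-- A linear extension of a poset `P`: a list of all elements of `P`, each occurring exactly
once, such that `vᵢ < vⱼ` in `P` implies `i < j`. -/
def IsLinearExtension {P : Type*} [PartialOrder P] (L : List P) : Prop :=
  L.Nodup ∧ (∀ v : P, v ∈ L) ∧ L.Pairwise fun a b => ¬ b < a

section ToggleLemmas

variable {P : Type*} [PartialOrder P] [Fintype P] {K : Type*} [Ring K]

lemma toggle_eq_some {v : P} {h g : PHat P → K} (H : toggle v h = some g) :
    IsUnit (h (toPHat v)) ∧ (∀ u : PHat P, toPHat v ⋖ u → IsUnit (h u)) ∧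
      IsUnit (∑ u ∈ Finset.univ.filter (fun u : PHat P => toPHat v ⋖ u), Ring.inverse (h u)) ∧
      g = Function.update h (toPHat v)
        ((∑ u ∈ Finset.univ.filter (fun u : PHat P => u ⋖ toPHat v), h u) *
          Ring.inverse (h (toPHat v)) *
          Ring.inverse
            (∑ u ∈ Finset.univ.filter (fun u : PHat P => toPHat v ⋖ u),
              Ring.inverse (h u))) := by
  unfold toggle at H
  split at H
  · next hc => exact ⟨hc.1, hc.2.1, hc.2.2, (Option.some_injective _ H).symm⟩
  · exact absurd H (by simp)

lemma toggleList_append (A B : List P) (f : PHat P → K) :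
    toggleList (A ++ B) f = (toggleList B f).bind (toggleList A) := by
  induction A with
  | nil => simp [toggleList]
  | cons a A ih =>
    show (toggleList (A ++ B) f).bind (toggle a) = _
    rw [ih, Option.bind_assoc]
    rfl

lemma toggleList_apply_eq {L : List P} {f g : PHat P → K} (H : toggleList L f = some g)
    {x : PHat P} (hx : ∀ v ∈ L, toPHat v ≠ x) : g x = f x := by
  induction L generalizing g with
  | nil =>
    simp only [toggleList, Option.some_inj] at H
    rw [← H]
  | cons v L ih =>
    simp only [toggleList] at H
    obtain ⟨h, hh, htog⟩ := Option.bind_eq_some_iff.mp H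
    obtain ⟨-, -, -, rfl⟩ := toggle_eq_some htog
    rw [Function.update_of_ne (hx v List.mem_cons_self).symm]
    · exact ih hh fun w hw => hx w (List.mem_cons_of_mem _ hw)

end ToggleLemmas

section Key

variable {P : Type*} [PartialOrder P] [Fintype P] {K : Type*} [Ring K]

lemma key {L : List P} (hL : IsLinearExtension L) {f g : PHat P → K}
    (hfg : toggleList L f = some g) (v : P) :
    IsUnit (f (toPHat v)) ∧ (∀ u : PHat P, toPHat v ⋖ u → IsUnit (g u)) ∧
      IsUnit (∑ u ∈ Finset.univ.filter (fun u : PHat P => toPHat v ⋖ u), Ring.inverse (g u)) ∧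
      g (toPHat v) *
          (∑ u ∈ Finset.univ.filter (fun u : PHat P => toPHat v ⋖ u), Ring.inverse (g u)) *
          f (toPHat v) =
        ∑ u ∈ Finset.univ.filter (fun u : PHat P => u ⋖ toPHat v), f u := by
  obtain ⟨hnd, hmem, hpw⟩ := hL
  obtain ⟨A, B, rfl⟩ := List.append_of_mem (hmem v)
  -- structural facts about the list
  have hvA : v ∉ A := by
    intro hvA
    exact (List.disjoint_of_nodup_append hnd hvA) List.mem_cons_self
  have hvB : v ∉ B := by
    have := (List.nodup_append'.mp hnd).2.1
    exact (List.nodup_cons.mp this).1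
  have hA : ∀ w ∈ A, ¬ v < w := by
    intro w hw
    exact (List.pairwise_append.mp hpw).2.2 w hw v List.mem_cons_self
  have hB : ∀ w ∈ B, ¬ w < v := by
    have := (List.pairwise_append.mp hpw).2.1
    exact (List.pairwise_cons.mp this).1
  -- decompose the toggling
  rw [toggleList_append] at hfg
  obtain ⟨h, hh, hA'⟩ := Option.bind_eq_some_iff.mp hfg
  simp only [toggleList] at hh
  obtain ⟨h₀, hh₀, htog⟩ := Option.bind_eq_some_iff.mp hh
  obtain ⟨u1, u2, u3, rfl⟩ := toggle_eq_some htog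
  -- transfer facts
  have e1 : h₀ (toPHat v) = f (toPHat v) :=
    toggleList_apply_eq hh₀ fun w hw he => hvB (by rwa [toPHat_injective he] at hw)
  have e2 : ∀ u : PHat P, toPHat v ⋖ u → g u = h₀ u := by
    intro u hu
    have hne : u ≠ toPHat v := hu.lt.ne'
    rw [toggleList_apply_eq hA' (fun w hw he => hA w hw (by
      rw [← he] at hu
      exact toPHat_lt_iff.mp hu.lt)), Function.update_of_ne hne]
  have e3 : ∀ u : PHat P, u ⋖ toPHat v → h₀ u = f u := by
    intro u hu
    refine toggleList_apply_eq hh₀ fun w hw he => hB w hw ?_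
    rw [← he] at hu
    exact toPHat_lt_iff.mp hu.lt
  have e4 : g (toPHat v) = Function.update h₀ (toPHat v)
      ((∑ u ∈ Finset.univ.filter (fun u : PHat P => u ⋖ toPHat v), h₀ u) *
        Ring.inverse (h₀ (toPHat v)) *
        Ring.inverse
          (∑ u ∈ Finset.univ.filter (fun u : PHat P => toPHat v ⋖ u),
            Ring.inverse (h₀ u))) (toPHat v) :=
    toggleList_apply_eq hA' fun w hw he => hvA (by rwa [← toPHat_injective he])
  rw [Function.update_self] at e4
  -- rewrite the sums
  have eS : (∑ u ∈ Finset.univ.filter (fun u : PHat P => toPHat v ⋖ u), Ring.inverse (h₀ u))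
      = ∑ u ∈ Finset.univ.filter (fun u : PHat P => toPHat v ⋖ u), Ring.inverse (g u) := by
    refine Finset.sum_congr rfl fun u hu => ?_
    rw [e2 u (Finset.mem_filter.mp hu).2]
  have eC : (∑ u ∈ Finset.univ.filter (fun u : PHat P => u ⋖ toPHat v), h₀ u)
      = ∑ u ∈ Finset.univ.filter (fun u : PHat P => u ⋖ toPHat v), f u := by
    refine Finset.sum_congr rfl fun u hu => e3 u (Finset.mem_filter.mp hu).2
  rw [e1] at u1
  rw [eS] at u3
  rw [eS, eC, e1] at e4
  refine ⟨u1, fun u hu => by rw [e2 u hu]; exact u2 u hu, u3, ?_⟩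
  -- the product identity
  set S := ∑ u ∈ Finset.univ.filter (fun u : PHat P => toPHat v ⋖ u), Ring.inverse (g u)
  set C := ∑ u ∈ Finset.univ.filter (fun u : PHat P => u ⋖ toPHat v), f u
  rw [e4]
  rw [Ring.inverse_mul_cancel_right _ _ u3, Ring.inverse_mul_cancel_right _ _ u1]

end Key

section MainAux

variable {P : Type*} [PartialOrder P] [Fintype P] {K : Type*} [Ring K]

lemma phat_cases (u : PHat P) : u = ⊥ ∨ u = ⊤ ∨ ∃ w : P, u = toPHat w := by
  induction u using WithBot.recBotCoe with
  | bot => exact Or.inl rfl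
  | coe a =>
    induction a using WithTop.recTopCoe with
    | top => exact Or.inr (Or.inl rfl)
    | coe w => exact Or.inr (Or.inr ⟨w, rfl⟩)

end MainAux

/-- For any finite poset `P` and any `K`-labeling `f` with `R f ≠ ⊥`,
assuming `(R f)(u)` is invertible for all `u ⋗ 0`, one has
`b · (∑_{u ⋗ 0} ((R f) u)⁻¹) · a = ∑_{u ⋖ 1} f u`, where `a = f(0)`, `b = f(1)`. -/
theorem stmt18 {P : Type*} [PartialOrder P] [Fintype P] {K : Type*} [Ring K]
    (L : List P) (hL : IsLinearExtension L) (f g : PHat P → K)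
    (hfg : toggleList L f = some g)
    (hinv : ∀ u : PHat P, (⊥ : PHat P) ⋖ u → IsUnit (g u)) :
    f ⊤ * (∑ u ∈ Finset.univ.filter (fun u : PHat P => (⊥ : PHat P) ⋖ u),
        Ring.inverse (g u)) * f ⊥ =
      ∑ u ∈ Finset.univ.filter (fun u : PHat P => u ⋖ (⊤ : PHat P)), f u := by
  classical
  by_cases hP : Nonempty P
  case neg =>
    haveI : IsEmpty P := not_nonempty_iff.mp hP
    have hLnil : L = [] := by
      cases L with
      | nil => rfl
      | cons v _ => exact isEmptyElim v
    subst hLnil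
    simp only [toggleList, Option.some_inj] at hfg
    subst hfg
    have hbt : (⊥ : PHat P) ⋖ ⊤ := by
      constructor
      · exact bot_lt_top
      · intro c hc1 hc2
        rcases phat_cases c with rfl | rfl | ⟨w, rfl⟩
        · exact lt_irrefl _ hc1
        · exact lt_irrefl _ hc2
        · exact isEmptyElim w
    rw [sum_filter_phat, sum_filter_phat]
    rw [if_neg (fun h : (⊥:PHat P) ⋖ ⊥ => lt_irrefl _ h.lt), if_pos hbt, if_pos hbt,
      if_neg (fun h : (⊤:PHat P) ⋖ ⊤ => lt_irrefl _ h.lt)]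
    rw [Finset.univ_eq_empty (α := P)]
    simp only [Finset.filter_empty, Finset.sum_empty, add_zero, zero_add]
    rw [Ring.mul_inverse_cancel _ (hinv ⊤ hbt), one_mul]
  case pos =>
    obtain ⟨p₀⟩ := hP
    have hbt : ¬ (⊥ : PHat P) ⋖ ⊤ :=
      fun h => h.2 (bot_lt_toPHat p₀) (toPHat_lt_top p₀)
    have hgtop : g ⊤ = f ⊤ := toggleList_apply_eq hfg fun w _ => toPHat_ne_top w
    have hm : ∃ m : P, toPHat m ⋖ (⊤ : PHat P) := by
      have h1 : ¬ IsMin (⊤ : PHat P) :=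
        fun h => (bot_lt_toPHat p₀).not_ge ((le_top (a := toPHat p₀)).trans (h bot_le))
      obtain ⟨a', ha'⟩ := exists_covBy_of_wellFoundedGT h1
      rcases phat_cases a' with rfl | rfl | ⟨m, rfl⟩
      · exact absurd ha' hbt
      · exact absurd ha'.lt (lt_irrefl _)
      · exact ⟨m, ha'⟩
    obtain ⟨m, hmcov⟩ := hm
    have hb : IsUnit (f ⊤) := by
      rw [← hgtop]; exact (key hL hfg m).2.1 ⊤ hmcov
    have hgunit : ∀ v : P, IsUnit (g (toPHat v)) := by
      intro v
      have h1 : ¬ IsMin (toPHat v) := fun h => (bot_lt_toPHat v).not_ge (h bot_le)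
      obtain ⟨u, hu⟩ := exists_covBy_of_wellFoundedGT h1
      rcases phat_cases u with rfl | rfl | ⟨w, rfl⟩
      · exact hinv _ hu
      · exact absurd hu.lt not_top_lt
      · exact (key hL hfg w).2.1 _ hu
    -- per-element identity
    have main : ∀ v : P,
        (∑ u ∈ Finset.univ.filter (fun u : PHat P => toPHat v ⋖ u),
            f ⊤ * Ring.inverse (g u) * f (toPHat v)) =
          ∑ u ∈ Finset.univ.filter (fun u : PHat P => u ⋖ toPHat v),
            f ⊤ * Ring.inverse (g (toPHat v)) * f u := by
      intro v
      obtain ⟨u1, u2, u3, kp⟩ := key hL hfg v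
      have e : Ring.inverse (g (toPHat v)) *
          (∑ u ∈ Finset.univ.filter (fun u : PHat P => u ⋖ toPHat v), f u) =
          (∑ u ∈ Finset.univ.filter (fun u : PHat P => toPHat v ⋖ u), Ring.inverse (g u)) *
            f (toPHat v) := by
        rw [← kp, mul_assoc, Ring.inverse_mul_cancel_left _ _ (hgunit v)]
      calc (∑ u ∈ Finset.univ.filter (fun u : PHat P => toPHat v ⋖ u),
            f ⊤ * Ring.inverse (g u) * f (toPHat v))
          = f ⊤ * ((∑ u ∈ Finset.univ.filter (fun u : PHat P => toPHat v ⋖ u),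
              Ring.inverse (g u)) * f (toPHat v)) := by
            rw [← Finset.sum_mul, ← Finset.mul_sum, mul_assoc]
        _ = f ⊤ * (Ring.inverse (g (toPHat v)) *
              ∑ u ∈ Finset.univ.filter (fun u : PHat P => u ⋖ toPHat v), f u) := by rw [e]
        _ = ∑ u ∈ Finset.univ.filter (fun u : PHat P => u ⋖ toPHat v),
              f ⊤ * Ring.inverse (g (toPHat v)) * f u := by
            rw [Finset.mul_sum, Finset.mul_sum]
            exact Finset.sum_congr rfl fun u _ => by rw [← mul_assoc]
    -- expand left-hand sides
    have L1 : ∀ v : P,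
        (∑ u ∈ Finset.univ.filter (fun u : PHat P => toPHat v ⋖ u),
            f ⊤ * Ring.inverse (g u) * f (toPHat v)) =
          (if toPHat v ⋖ (⊤ : PHat P) then f (toPHat v) else 0) +
            ∑ w : P, (if toPHat v ⋖ toPHat w then
              f ⊤ * Ring.inverse (g (toPHat w)) * f (toPHat v) else 0) := by
      intro v
      rw [sum_filter_phat, if_neg (fun h : toPHat v ⋖ ⊥ => not_lt_bot h.lt), zero_add,
        Finset.sum_filter]
      congr 1
      split_ifs with h
      · rw [hgtop, Ring.mul_inverse_cancel _ hb, one_mul]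
      · rfl
    have R1 : ∀ v : P,
        (∑ u ∈ Finset.univ.filter (fun u : PHat P => u ⋖ toPHat v),
            f ⊤ * Ring.inverse (g (toPHat v)) * f u) =
          (if (⊥ : PHat P) ⋖ toPHat v then
              f ⊤ * Ring.inverse (g (toPHat v)) * f ⊥ else 0) +
            ∑ w : P, (if toPHat w ⋖ toPHat v then
              f ⊤ * Ring.inverse (g (toPHat v)) * f (toPHat w) else 0) := by
      intro v
      rw [sum_filter_phat, if_neg (fun h : (⊤:PHat P) ⋖ toPHat v => not_top_lt h.lt),
        add_zero, Finset.sum_filter]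
    have sumeq : (∑ v : P, ((if toPHat v ⋖ (⊤ : PHat P) then f (toPHat v) else 0) +
          ∑ w : P, (if toPHat v ⋖ toPHat w then
            f ⊤ * Ring.inverse (g (toPHat w)) * f (toPHat v) else 0))) =
        ∑ v : P, ((if (⊥ : PHat P) ⋖ toPHat v then
            f ⊤ * Ring.inverse (g (toPHat v)) * f ⊥ else 0) +
          ∑ w : P, (if toPHat w ⋖ toPHat v then
            f ⊤ * Ring.inverse (g (toPHat v)) * f (toPHat w) else 0)) := by
      refine Finset.sum_congr rfl fun v _ => ?_
      rw [← L1, ← R1]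
      exact main v
    rw [Finset.sum_add_distrib, Finset.sum_add_distrib] at sumeq
    have hD : (∑ v : P, ∑ w : P, (if toPHat v ⋖ toPHat w then
          f ⊤ * Ring.inverse (g (toPHat w)) * f (toPHat v) else 0)) =
        ∑ v : P, ∑ w : P, (if toPHat w ⋖ toPHat v then
          f ⊤ * Ring.inverse (g (toPHat v)) * f (toPHat w) else 0) :=
      Finset.sum_comm
    rw [hD] at sumeq
    have cancel := add_right_cancel sumeq
    -- convert the goal
    rw [sum_filter_phat, if_neg (fun h : (⊥:PHat P) ⋖ ⊥ => lt_irrefl _ h.lt),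
      if_neg hbt, zero_add, zero_add, sum_filter_phat, if_neg hbt,
      if_neg (fun h : (⊤:PHat P) ⋖ ⊤ => lt_irrefl _ h.lt), zero_add, zero_add]
    calc f ⊤ * (∑ w ∈ Finset.univ.filter (fun w : P => (⊥ : PHat P) ⋖ toPHat w),
            Ring.inverse (g (toPHat w))) * f ⊥
        = ∑ w ∈ Finset.univ.filter (fun w : P => (⊥ : PHat P) ⋖ toPHat w),
            f ⊤ * Ring.inverse (g (toPHat w)) * f ⊥ := by
          rw [Finset.mul_sum, Finset.sum_mul]
      _ = ∑ v : P, (if (⊥ : PHat P) ⋖ toPHat v then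
            f ⊤ * Ring.inverse (g (toPHat v)) * f ⊥ else 0) := (Finset.sum_filter _ _)
      _ = ∑ v : P, (if toPHat v ⋖ (⊤ : PHat P) then f (toPHat v) else 0) := cancel.symm
      _ = ∑ w ∈ Finset.univ.filter (fun w : P => toPHat w ⋖ (⊤ : PHat P)), f (toPHat w) :=
          (Finset.sum_filter _ _).symm
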